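/- Let a : ℝ → ℝ be a C^∞ function with a(s) = 0 for all s ≤ 0, and let A, f, g, X̃, Ỹ, Z̃ be defined as in the Cairns–Ghys perturbation. Then for every p ∈ ℝ³ the bracket relations [X̃,Ỹ](p) = −Z̃(p), [Z̃,X̃](p) = Ỹ(p), and [Z̃,Ỹ](p) = −X̃(p) hold; thus X̃, Ỹ, Z̃ span a Lie algebra of vector fields isomorphic to 𝔰𝔩(2,ℝ). -/

import Mathlib

noncomputable section

/-- The linear vector field `X(x,y,z) = (0,z,y)` on `ℝ³`. -/
def Xf (p : Fin 3 → ℝ) : Fin 3 → ℝ := ![0, p 2, p 1]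

/-- The linear vector field `Y(x,y,z) = (z,0,x)` on `ℝ³`. -/
def Yf (p : Fin 3 → ℝ) : Fin 3 → ℝ := ![p 2, 0, p 0]

/-- The linear vector field `Z(x,y,z) = (−y,x,0)` on `ℝ³`. -/
def Zf (p : Fin 3 → ℝ) : Fin 3 → ℝ := ![-p 1, p 0, 0]

/-- The Lie bracket of vector fields: `[V,W](p) = DW(p)(V(p)) − DV(p)(W(p))`. -/
def lieBr (V W : (Fin 3 → ℝ) → (Fin 3 → ℝ)) (p : Fin 3 → ℝ) : Fin 3 → ℝ :=
  fderiv ℝ W p (V p) - fderiv ℝ V p (W p)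

/-- The radial vector field `R(x,y,z) = (x,y,z)`. -/
def Rf (p : Fin 3 → ℝ) : Fin 3 → ℝ := p

/-- The quadratic form `x² + y² − z²`. -/
def Qf (p : Fin 3 → ℝ) : ℝ := (p 0) ^ 2 + (p 1) ^ 2 - (p 2) ^ 2

/-- `A(x,y,z) = a(x²+y²−z²)/(x²+y²)` when `x²+y² ≠ 0`, and `0` when `x²+y² = 0`. -/
def Afun (a : ℝ → ℝ) (p : Fin 3 → ℝ) : ℝ :=
  if (p 0) ^ 2 + (p 1) ^ 2 = 0 then 0 else a (Qf p) / ((p 0) ^ 2 + (p 1) ^ 2)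

/-- `f = x·A`. -/
def ff (a : ℝ → ℝ) (p : Fin 3 → ℝ) : ℝ := p 0 * Afun a p

/-- `g = −y·A`. -/
def gf (a : ℝ → ℝ) (p : Fin 3 → ℝ) : ℝ := -p 1 * Afun a p

/-- The Cairns–Ghys perturbed field `X̃ = X + f·R`. -/
def Xt (a : ℝ → ℝ) (p : Fin 3 → ℝ) : Fin 3 → ℝ := Xf p + ff a p • Rf p

/-- The Cairns–Ghys perturbed field `Ỹ = Y + g·R`. -/
def Yt (a : ℝ → ℝ) (p : Fin 3 → ℝ) : Fin 3 → ℝ := Yf p + gf a p • Rf p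

/-- The Cairns–Ghys perturbed field `Z̃ = Z`. -/
def Zt (p : Fin 3 → ℝ) : Fin 3 → ℝ := Zf p

open Topology Filter

-- auxiliary stuff
def dQ (p : Fin 3 → ℝ) : (Fin 3 → ℝ) →L[ℝ] ℝ :=
  (2*p 0) • ContinuousLinearMap.proj 0 + (2*p 1) • ContinuousLinearMap.proj 1
    - (2*p 2) • ContinuousLinearMap.proj 2

@[simp] lemma dQ_apply (p v : Fin 3 → ℝ) : dQ p v = 2*p 0*v 0 + 2*p 1*v 1 - 2*p 2*v 2 := by
  simp [dQ]

def dU (p : Fin 3 → ℝ) : (Fin 3 → ℝ) →L[ℝ] ℝ :=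
  (2*p 0) • ContinuousLinearMap.proj 0 + (2*p 1) • ContinuousLinearMap.proj 1

@[simp] lemma dU_apply (p v : Fin 3 → ℝ) : dU p v = 2*p 0*v 0 + 2*p 1*v 1 := by
  simp [dU]

lemma hasFDerivAt_Qf (p : Fin 3 → ℝ) : HasFDerivAt Qf (dQ p) p := by
  have h0 := hasFDerivAt_apply (𝕜 := ℝ) (0 : Fin 3) p
  have h1 := hasFDerivAt_apply (𝕜 := ℝ) (1 : Fin 3) p
  have h2 := hasFDerivAt_apply (𝕜 := ℝ) (2 : Fin 3) p
  have h := ((h0.mul h0).add (h1.mul h1)).sub (h2.mul h2)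
  have heq : Qf = fun q : Fin 3 → ℝ => q 0 * q 0 + q 1 * q 1 - q 2 * q 2 := by
    funext q; simp [Qf]; ring
  rw [heq]
  exact h.congr_fderiv (by ext v; simp; ring)

lemma hasFDerivAt_U (p : Fin 3 → ℝ) :
    HasFDerivAt (fun q : Fin 3 → ℝ => q 0 ^ 2 + q 1 ^ 2) (dU p) p := by
  have h0 := hasFDerivAt_apply (𝕜 := ℝ) (0 : Fin 3) p
  have h1 := hasFDerivAt_apply (𝕜 := ℝ) (1 : Fin 3) p
  have h := (h0.mul h0).add (h1.mul h1)
  have heq : (fun q : Fin 3 → ℝ => q 0 ^ 2 + q 1 ^ 2)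
      = fun q : Fin 3 → ℝ => q 0 * q 0 + q 1 * q 1 := by
    funext q; ring
  rw [heq]
  exact h.congr_fderiv (by ext v; simp; ring)

def XL : (Fin 3 → ℝ) →L[ℝ] (Fin 3 → ℝ) :=
  ContinuousLinearMap.pi ![0, ContinuousLinearMap.proj 2, ContinuousLinearMap.proj 1]
def YL : (Fin 3 → ℝ) →L[ℝ] (Fin 3 → ℝ) :=
  ContinuousLinearMap.pi ![ContinuousLinearMap.proj 2, 0, ContinuousLinearMap.proj 0]
def ZL : (Fin 3 → ℝ) →L[ℝ] (Fin 3 → ℝ) :=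
  ContinuousLinearMap.pi ![-ContinuousLinearMap.proj 1, ContinuousLinearMap.proj 0, 0]

lemma Xf_eq : Xf = ⇑XL := by
  funext p; ext i; fin_cases i <;> simp [Xf, XL]
lemma Yf_eq : Yf = ⇑YL := by
  funext p; ext i; fin_cases i <;> simp [Yf, YL]
lemma Zf_eq : Zf = ⇑ZL := by
  funext p; ext i; fin_cases i <;> simp [Zf, ZL]

@[simp] lemma XL_apply (v : Fin 3 → ℝ) (i : Fin 3) : XL v i = ![0, v 2, v 1] i := by
  rw [← Xf_eq]; rfl
@[simp] lemma YL_apply (v : Fin 3 → ℝ) (i : Fin 3) : YL v i = ![v 2, 0, v 0] i := by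
  rw [← Yf_eq]; rfl
@[simp] lemma ZL_apply (v : Fin 3 → ℝ) (i : Fin 3) : ZL v i = ![-v 1, v 0, 0] i := by
  rw [← Zf_eq]; rfl

set_option maxHeartbeats 2000000 in
/-- If `a` is `C^∞` and vanishes on `(−∞,0]`, the Cairns–Ghys perturbed vector fields
`X̃ = X + f·R`, `Ỹ = Y + g·R`, `Z̃ = Z` satisfy the same `𝔰𝔩(2,ℝ)` bracket relations
`[X̃,Ỹ] = −Z̃`, `[Z̃,X̃] = Ỹ`, `[Z̃,Ỹ] = −X̃` at every point of `ℝ³`. -/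
theorem cairnsGhys_bracket_relations
    (a : ℝ → ℝ) (ha : ContDiff ℝ (⊤ : ℕ∞) a) (ha0 : ∀ s : ℝ, s ≤ 0 → a s = 0) :
    ∀ p : Fin 3 → ℝ,
      lieBr (Xt a) (Yt a) p = -Zt p ∧
      lieBr Zt (Xt a) p = Yt a p ∧
      lieBr Zt (Yt a) p = -Xt a p := by
  have hZt_eq : Zt = ⇑ZL := by rw [← Zf_eq]; rfl
  intro p
  have hZt : HasFDerivAt Zt ZL p := by rw [hZt_eq]; exact ZL.hasFDerivAt
  by_cases hu : (p 0) ^ 2 + (p 1) ^ 2 = 0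
  · have h0 : p 0 = 0 := by nlinarith [sq_nonneg (p 0), sq_nonneg (p 1)]
    have h1 : p 1 = 0 := by nlinarith [sq_nonneg (p 0), sq_nonneg (p 1)]
    have hA0 : Afun a p = 0 := by simp [Afun, hu]
    by_cases hz : p 2 = 0
    · -- origin: all fields vanish at p
      have hX0 : Xt a p = 0 := by
        funext i; fin_cases i <;> simp [Xt, Xf, Rf, ff, hA0, h0, h1, hz]
      have hY0 : Yt a p = 0 := by
        funext i; fin_cases i <;> simp [Yt, Yf, Rf, gf, hA0, h0, h1, hz]
      have hZ0 : Zt p = 0 := by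
        funext i; fin_cases i <;> simp [Zt, Zf, h0, h1]
      refine ⟨?_, ?_, ?_⟩ <;> simp [lieBr, hX0, hY0, hZ0]
    · -- on the z-axis, away from the origin: fields are locally linear
      have hev : Afun a =ᶠ[𝓝 p] fun _ => 0 := by
        have hc : Continuous fun q : Fin 3 → ℝ => q 0 ^ 2 + q 1 ^ 2 - q 2 ^ 2 := by fun_prop
        have hopen : IsOpen {q : Fin 3 → ℝ | q 0 ^ 2 + q 1 ^ 2 - q 2 ^ 2 < 0} :=
          isOpen_lt hc continuous_const
        have hmem : p ∈ {q : Fin 3 → ℝ | q 0 ^ 2 + q 1 ^ 2 - q 2 ^ 2 < 0} := by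
          simp only [Set.mem_setOf_eq, h0, h1]
          nlinarith [sq_nonneg (p 2), sq_abs (p 2), abs_pos.2 hz]
        filter_upwards [hopen.mem_nhds hmem] with q hq
        have haq : a (Qf q) = 0 := ha0 _ (by simpa [Qf] using hq.le)
        by_cases h : q 0 ^ 2 + q 1 ^ 2 = 0 <;> simp [Afun, h, haq]
      have hXt : HasFDerivAt (Xt a) XL p := by
        refine XL.hasFDerivAt.congr_of_eventuallyEq ?_
        filter_upwards [hev] with q hq
        simp [Xt, ff, hq, ← Xf_eq]
      have hYt : HasFDerivAt (Yt a) YL p := by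
        refine YL.hasFDerivAt.congr_of_eventuallyEq ?_
        filter_upwards [hev] with q hq
        simp [Yt, gf, hq, ← Yf_eq]
      have hXv : Xt a p = Xf p := by simp [Xt, ff, hA0]
      have hYv : Yt a p = Yf p := by simp [Yt, gf, hA0]
      refine ⟨?_, ?_, ?_⟩ <;>
        simp only [lieBr, hXt.fderiv, hYt.fderiv, hZt.fderiv] <;>
        funext i <;>
        fin_cases i <;>
        simp [hXv, hYv, Zt, Xf, Yf, Zf, Xt, Yt, ff, gf, Rf, hA0]
  · -- off the z-axis
    have hQ := hasFDerivAt_Qf p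
    have hU := hasFDerivAt_U p
    have hda : HasDerivAt a (deriv a (Qf p)) (Qf p) :=
      ((ha.differentiable (by simp)) (Qf p)).hasDerivAt
    have haQ : HasFDerivAt (fun q => a (Qf q)) (deriv a (Qf p) • dQ p) p :=
      hda.comp_hasFDerivAt p hQ
    have hinv : HasFDerivAt (fun q : Fin 3 → ℝ => (q 0 ^ 2 + q 1 ^ 2)⁻¹)
        ((-((p 0 ^ 2 + p 1 ^ 2) ^ 2)⁻¹) • dU p) p :=
      (hasDerivAt_inv hu).comp_hasFDerivAt p hU
    have hA' := haQ.mul hinv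
    have hev : Afun a =ᶠ[𝓝 p]
        fun q => a (Qf q) * (q 0 ^ 2 + q 1 ^ 2)⁻¹ := by
      have hopen : IsOpen {q : Fin 3 → ℝ | q 0 ^ 2 + q 1 ^ 2 ≠ 0} := by
        have hc : Continuous fun q : Fin 3 → ℝ => q 0 ^ 2 + q 1 ^ 2 := by fun_prop
        exact isOpen_compl_singleton.preimage hc
      filter_upwards [hopen.mem_nhds hu] with q hq
      simp [Afun, hq, div_eq_mul_inv]
    have hA := hA'.congr_of_eventuallyEq hev
    have h0 := hasFDerivAt_apply (𝕜 := ℝ) (0 : Fin 3) p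
    have h1 := hasFDerivAt_apply (𝕜 := ℝ) (1 : Fin 3) p
    have hff := h0.mul hA
    have hng : HasFDerivAt (fun q : Fin 3 → ℝ => -q 1)
        (-(ContinuousLinearMap.proj 1 : (Fin 3 → ℝ) →L[ℝ] ℝ)) p := h1.neg
    have hgg := hng.mul hA
    have hRf : HasFDerivAt Rf (ContinuousLinearMap.id ℝ (Fin 3 → ℝ)) p := hasFDerivAt_id p
    have hXt := (XL.hasFDerivAt.add (hff.smul hRf)).congr_of_eventuallyEq
      (Filter.Eventually.of_forall fun q => by
        show Xt a q = _
        simp [Xt, ff, ← Xf_eq])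
    have hYt := (YL.hasFDerivAt.add (hgg.smul hRf)).congr_of_eventuallyEq
      (Filter.Eventually.of_forall fun q => by
        show Yt a q = _
        simp [Yt, gf, ← Yf_eq])
    have hAv : Afun a p = a (Qf p) * (p 0 ^ 2 + p 1 ^ 2)⁻¹ := by
      simp [Afun, hu, div_eq_mul_inv]
    refine ⟨?_, ?_, ?_⟩ <;>
      · simp only [lieBr, hXt.fderiv, hYt.fderiv, hZt.fderiv]
        funext i
        fin_cases i <;>
        · simp only [ContinuousLinearMap.add_apply, ContinuousLinearMap.coe_smul',
            ContinuousLinearMap.smulRight_apply, ContinuousLinearMap.id_apply, Pi.smul_apply,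
            Pi.add_apply, Pi.sub_apply, Pi.neg_apply, ContinuousLinearMap.neg_apply,
            ContinuousLinearMap.proj_apply, dQ_apply, dU_apply, smul_eq_mul,
            XL_apply, YL_apply, ZL_apply]
          simp only [Xt, Yt, Zt, Xf, Yf, Zf, ff, gf, Rf, hAv, Pi.mul_apply, Pi.add_apply, Pi.smul_apply,
            smul_eq_mul, Fin.isValue, Matrix.cons_val_zero, Matrix.cons_val_one, Matrix.head_cons,
            Matrix.cons_val_two, Matrix.tail_cons, Pi.neg_apply, neg_mul]
          simp only [Fin.reduceFinMk, Fin.isValue, Matrix.cons_val_zero, Matrix.cons_val_one,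
            Matrix.head_cons, Matrix.cons_val_two, Matrix.tail_cons]
          field_simp
          ring
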